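/- For every real number k, the function r ↦ sinc(r)² e^{irk} is Lebesgue integrable on ℝ and ∫_{-∞}^{∞} sinc(r)² e^{irk} dr = (π/4)((k-2)sgn(k-2) - 2k·sgn(k) + (k+2)sgn(k+2)), where sgn denotes the sign function (sgn 0 = 0). -/

import Mathlib

open Complex MeasureTheory

/-- The unnormalized sinc function on the real line. -/
noncomputable def rsinc (x : ℝ) : ℝ := if x = 0 then 1 else Real.sin x / x


open Real Set FourierTransform Filter intervalIntegral


noncomputable def trif (x : ℝ) : ℂ := ((Real.pi * max (1 - Real.pi * |x|) 0 : ℝ) : ℂ)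

lemma trif_zero {x : ℝ} (hx : x ∉ Set.Icc (-Real.pi⁻¹) Real.pi⁻¹) : trif x = 0 := by
  have hπ := Real.pi_pos
  have h1 : Real.pi⁻¹ < |x| := by
    rcases abs_cases x with ⟨h, _⟩ | ⟨h, _⟩ <;>
      simp only [Set.mem_Icc, not_and_or, not_le] at hx <;> rcases hx with h' | h' <;> linarith
  have : 1 - Real.pi * |x| ≤ 0 := by
    nlinarith [mul_lt_mul_of_pos_left h1 hπ, mul_inv_cancel₀ hπ.ne']
  simp [trif, max_eq_right this]

lemma trif_cont : Continuous trif := by unfold trif; fun_prop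

-- real integral computation
lemma real_piece (w : ℝ) :
    ∫ u in (0:ℝ)..Real.pi⁻¹,
      2 * Real.cos (-2 * Real.pi * u * w) * (Real.pi * max (1 - Real.pi * |u|) 0)
      = rsinc w ^ 2 := by
  have hπ := Real.pi_pos
  have ha0 : (0:ℝ) < Real.pi⁻¹ := inv_pos.mpr hπ
  have hcong : ∀ u ∈ Set.uIcc (0:ℝ) Real.pi⁻¹,
      2 * Real.cos (-2 * Real.pi * u * w) * (Real.pi * max (1 - Real.pi * |u|) 0)
        = 2 * Real.cos (-2 * Real.pi * u * w) * (Real.pi * (1 - Real.pi * u)) := by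
    intro u hu
    rw [Set.uIcc_of_le ha0.le] at hu
    obtain ⟨hu0, hu1⟩ := hu
    have h1 : Real.pi * u ≤ 1 := by
      calc Real.pi * u ≤ Real.pi * Real.pi⁻¹ := by nlinarith
      _ = 1 := mul_inv_cancel₀ hπ.ne'
    rw [_root_.abs_of_nonneg hu0, max_eq_left (by linarith)]
  rw [intervalIntegral.integral_congr hcong]
  rcases eq_or_ne w 0 with rfl | hw
  · have hder : ∀ u ∈ Set.uIcc (0:ℝ) Real.pi⁻¹,
        HasDerivAt (fun u => 2 * Real.pi * u - Real.pi ^ 2 * u ^ 2)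
          (2 * Real.cos (-2 * Real.pi * u * 0) * (Real.pi * (1 - Real.pi * u))) u := by
      intro u _
      have h := (((hasDerivAt_id u).const_mul (2 * Real.pi)).sub
        (((hasDerivAt_id u).pow 2).const_mul (Real.pi ^ 2)))
      refine h.congr_deriv ?_
      simp
      ring
    rw [intervalIntegral.integral_eq_sub_of_hasDerivAt hder
      ((Continuous.intervalIntegrable (by fun_prop) _ _))]
    have h2 : Real.pi * Real.pi⁻¹ = 1 := mul_inv_cancel₀ hπ.ne'
    have : rsinc 0 = 1 := if_pos rfl
    rw [this]
    field_simp
    ring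
  · set c : ℝ := 2 * Real.pi * w with hc
    have hc0 : c ≠ 0 := mul_ne_zero (mul_ne_zero two_ne_zero hπ.ne') hw
    have hlin : ∀ u : ℝ, HasDerivAt (fun x : ℝ => c * x) c u := fun u => by
      simpa using (hasDerivAt_id u).const_mul c
    have hsin : ∀ u : ℝ, HasDerivAt (fun x => Real.sin (c * x)) (Real.cos (c * u) * c) u :=
      fun u => (Real.hasDerivAt_sin (c * u)).comp u (hlin u)
    have hcos : ∀ u : ℝ, HasDerivAt (fun x => Real.cos (c * x)) (-Real.sin (c * u) * c) u :=
      fun u => (Real.hasDerivAt_cos (c * u)).comp u (hlin u)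
    set H : ℝ → ℝ := fun u => 2 * Real.pi *
      ((1 - Real.pi * u) * Real.sin (c * u) / c - Real.pi * Real.cos (c * u) / c ^ 2) with hH
    have hder : ∀ u ∈ Set.uIcc (0:ℝ) Real.pi⁻¹,
        HasDerivAt H (2 * Real.cos (-2 * Real.pi * u * w) * (Real.pi * (1 - Real.pi * u))) u := by
      intro u _
      have h1 : HasDerivAt (fun x : ℝ => (1 - Real.pi * x)) (-Real.pi) u := by
        exact ((hasDerivAt_const u (1:ℝ)).sub ((hasDerivAt_id u).const_mul Real.pi)).congr_deriv (by simp)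
      have h2 := (h1.mul (hsin u)).div_const c
      have h3 := ((hcos u).const_mul Real.pi).div_const (c ^ 2)
      have h4 := (h2.sub h3).const_mul (2 * Real.pi)
      refine h4.congr_deriv ?_
      rw [show -2 * Real.pi * u * w = -(c * u) by rw [hc]; ring, Real.cos_neg]
      field_simp
      ring
    rw [intervalIntegral.integral_eq_sub_of_hasDerivAt hder
      (Continuous.intervalIntegrable (by fun_prop) _ _)]
    have e1 : Real.pi * Real.pi⁻¹ = 1 := mul_inv_cancel₀ hπ.ne'
    have e2 : c * Real.pi⁻¹ = 2 * w := by
      rw [hc]; field_simp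
    have hrs : rsinc w = Real.sin w / w := if_neg hw
    have hcw := Real.cos_two_mul w
    have hsw := Real.sin_sq_add_cos_sq w
    rw [hH]
    simp only [e1, e2, mul_zero, Real.sin_zero, Real.cos_zero, sub_self, zero_mul, zero_div,
      mul_one, hrs]
    rw [div_pow]
    field_simp
    linear_combination (-2*Real.pi^2*w^2) * hcw + (-4*Real.pi^2*w^2) * hsw +
      (-(Real.sin w^2) * (c + 2*Real.pi*w)) * hc

lemma fourier_trif (w : ℝ) : (𝓕 trif) w = ((rsinc w : ℂ)) ^ 2 := by
  have hπ := Real.pi_pos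
  have ha0 : (0:ℝ) < Real.pi⁻¹ := inv_pos.mpr hπ
  rw [Real.fourier_real_eq_integral_exp_smul]
  set F : ℝ → ℂ :=
    fun v => Complex.exp (((-2 * Real.pi * v * w : ℝ) : ℂ) * Complex.I) • trif v with hF
  have hFc : Continuous F := by
    refine Continuous.smul (f := fun v : ℝ => Complex.exp (((-2 * Real.pi * v * w : ℝ) : ℂ) * Complex.I)) ?_ trif_cont
    have : Continuous fun v : ℝ => ((-2 * Real.pi * v * w : ℝ) : ℂ) * Complex.I := by fun_prop
    exact Complex.continuous_exp.comp this
  have h1 : (∫ v : ℝ, F v) = ∫ v in Set.Icc (-Real.pi⁻¹) Real.pi⁻¹, F v :=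
    (setIntegral_eq_integral_of_forall_compl_eq_zero (fun x hx => by
      simp [hF, trif_zero hx])).symm
  have h2 : (∫ v in Set.Icc (-Real.pi⁻¹) Real.pi⁻¹, F v)
      = ∫ v in (-Real.pi⁻¹)..Real.pi⁻¹, F v := by
    rw [intervalIntegral.integral_of_le (by linarith), ← integral_Icc_eq_integral_Ioc]
  have h3 : (∫ v in (-Real.pi⁻¹)..Real.pi⁻¹, F v)
      = (∫ v in (-Real.pi⁻¹)..(0:ℝ), F v) + ∫ v in (0:ℝ)..Real.pi⁻¹, F v :=
    (intervalIntegral.integral_add_adjacent_intervals (hFc.intervalIntegrable _ _)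
      (hFc.intervalIntegrable _ _)).symm
  have h4 : (∫ v in (-Real.pi⁻¹)..(0:ℝ), F v) = ∫ v in (0:ℝ)..Real.pi⁻¹, F (-v) := by
    rw [intervalIntegral.integral_comp_neg]
    norm_num
  have h5 : (∫ v in (0:ℝ)..Real.pi⁻¹, F (-v)) + (∫ v in (0:ℝ)..Real.pi⁻¹, F v)
      = ∫ v in (0:ℝ)..Real.pi⁻¹, (F (-v) + F v) :=
    (intervalIntegral.integral_add ((hFc.comp continuous_neg).intervalIntegrable _ _)
      (hFc.intervalIntegrable _ _)).symm
  have key : ∀ v : ℝ, F (-v) + F v =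
      ((2 * Real.cos (-2 * Real.pi * v * w) * (Real.pi * max (1 - Real.pi * |v|) 0) : ℝ) : ℂ) := by
    intro v
    simp only [hF, trif, smul_eq_mul, abs_neg]
    set T : ℂ := ((Real.pi * max (1 - Real.pi * |v|) 0 : ℝ) : ℂ) with hT
    have e1 : ((-2 * Real.pi * -v * w : ℝ) : ℂ) = -((-2 * Real.pi * v * w : ℝ) : ℂ) := by
      push_cast; ring
    rw [e1]
    set θ : ℂ := ((-2 * Real.pi * v * w : ℝ) : ℂ) with hθ
    have e2 : Complex.exp (-θ * Complex.I) * T + Complex.exp (θ * Complex.I) * T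
        = (Complex.exp (θ * Complex.I) + Complex.exp (-θ * Complex.I)) * T := by ring
    rw [e2, ← Complex.two_cos, hθ, ← Complex.ofReal_cos, hT]
    push_cast
    ring
  calc (∫ v : ℝ, F v)
      = (∫ v in (0:ℝ)..Real.pi⁻¹, F (-v)) + ∫ v in (0:ℝ)..Real.pi⁻¹, F v := by
        rw [h1, h2, h3, h4]
    _ = ∫ v in (0:ℝ)..Real.pi⁻¹, (F (-v) + F v) := h5
    _ = ∫ v in (0:ℝ)..Real.pi⁻¹,
          ((2 * Real.cos (-2 * Real.pi * v * w) * (Real.pi * max (1 - Real.pi * |v|) 0) : ℝ) : ℂ) := by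
        simp only [key]
    _ = ((∫ v in (0:ℝ)..Real.pi⁻¹,
          2 * Real.cos (-2 * Real.pi * v * w) * (Real.pi * max (1 - Real.pi * |v|) 0) : ℝ) : ℂ) := by
        rw [intervalIntegral.integral_ofReal]
    _ = ((rsinc w ^ 2 : ℝ) : ℂ) := by rw [real_piece]
    _ = ((rsinc w : ℂ)) ^ 2 := by push_cast; ring

lemma trif_integrable : Integrable trif := by
  refine trif_cont.integrable_of_hasCompactSupport ?_
  exact HasCompactSupport.intro isCompact_Icc fun x hx => trif_zero hx

lemma arith_final (k : ℝ) : Real.pi * max (1 - Real.pi * |k / (2 * Real.pi)|) 0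
    = Real.pi / 4 * ((k - 2) * Real.sign (k - 2) - 2 * k * Real.sign k
        + (k + 2) * Real.sign (k + 2)) := by
  have hπ := Real.pi_pos
  have habs : ∀ x : ℝ, x * Real.sign x = |x| := by
    intro x
    rcases lt_trichotomy x 0 with h | rfl | h
    · rw [Real.sign_of_neg h, abs_of_neg h]; ring
    · simp
    · rw [Real.sign_of_pos h, _root_.abs_of_pos h]; ring
  have h1 : Real.pi * |k / (2 * Real.pi)| = |k| / 2 := by
    rw [abs_div, _root_.abs_of_pos (by positivity : (0:ℝ) < 2 * Real.pi)]
    field_simp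
  rw [h1, habs, mul_assoc 2 k, habs, habs]
  rcases le_total |k| 2 with h | h
  · rw [max_eq_left (by linarith)]
    rcases le_total 0 k with hk | hk
    · rw [_root_.abs_of_nonneg hk] at h ⊢
      rw [_root_.abs_of_nonpos (by linarith : k - 2 ≤ 0), _root_.abs_of_nonneg (by linarith : (0:ℝ) ≤ k + 2)]
      ring
    · rw [_root_.abs_of_nonpos hk] at h ⊢
      rw [_root_.abs_of_nonpos (by linarith : k - 2 ≤ 0), _root_.abs_of_nonneg (by linarith : (0:ℝ) ≤ k + 2)]
      ring
  · rw [max_eq_right (by linarith)]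
    rcases le_total 0 k with hk | hk
    · rw [_root_.abs_of_nonneg hk] at h ⊢
      rw [_root_.abs_of_nonneg (by linarith : (0:ℝ) ≤ k - 2), _root_.abs_of_nonneg (by linarith : (0:ℝ) ≤ k + 2)]
      ring
    · rw [_root_.abs_of_nonpos hk] at h ⊢
      rw [_root_.abs_of_nonpos (by linarith : k - 2 ≤ 0), _root_.abs_of_nonpos (by linarith : k + 2 ≤ 0)]
      ring



lemma rsinc_cont : Continuous rsinc := by
  rw [continuous_iff_continuousAt]
  intro x
  rcases eq_or_ne x 0 with rfl | hx
  · have h1 : HasDerivAt Real.sin 1 0 := by simpa using Real.hasDerivAt_sin 0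
    have h2 : Tendsto (slope Real.sin 0) (nhdsWithin 0 {0}ᶜ) (nhds 1) :=
      hasDerivAt_iff_tendsto_slope.mp h1
    have h3 : Tendsto rsinc (nhdsWithin 0 {0}ᶜ) (nhds 1) := by
      refine h2.congr' ?_
      filter_upwards [self_mem_nhdsWithin] with y hy
      simp only [Set.mem_compl_iff, Set.mem_singleton_iff] at hy
      simp [slope, rsinc, hy, div_eq_inv_mul]
    have h4 : Tendsto rsinc (pure (0:ℝ)) (nhds 1) := by
      have := tendsto_pure_nhds rsinc 0
      simpa [rsinc] using this
    have h5 := h3.sup h4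
    rw [nhdsNE_sup_pure] at h5
    have : rsinc 0 = 1 := if_pos rfl
    rw [ContinuousAt, this]
    exact h5
  · have : ContinuousAt (fun y => Real.sin y / y) x := by fun_prop (disch := assumption)
    refine this.congr ?_
    filter_upwards [isOpen_ne.mem_nhds hx] with y hy
    simp [rsinc, hy]

lemma rsinc_even (x : ℝ) : rsinc (-x) = rsinc x := by
  rcases eq_or_ne x 0 with rfl | hx
  · simp
  · simp [rsinc, hx, neg_ne_zero.mpr hx, neg_div_neg_eq]

lemma rsinc_sq_integrableOn_Ici : IntegrableOn (fun x => rsinc x ^ 2) (Ici (0:ℝ)) := by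
  have h1 : IntegrableOn (fun x => rsinc x ^ 2) (Icc (0:ℝ) 1) :=
    (rsinc_cont.pow 2).integrableOn_Icc
  have h2 : IntegrableOn (fun x => rsinc x ^ 2) (Ioi (1:ℝ)) := by
    have hg : IntegrableOn (fun x : ℝ => x ^ (-2 : ℝ)) (Ioi (1:ℝ)) :=
      integrableOn_Ioi_rpow_of_lt (by norm_num) one_pos
    refine hg.mono' ((rsinc_cont.pow 2).aestronglyMeasurable.restrict) ?_
    rw [ae_restrict_iff' measurableSet_Ioi]
    filter_upwards with x hx
    have hx1 : (1:ℝ) < x := hx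
    have hx0 : (0:ℝ) < x := lt_trans one_pos hx1
    have : rsinc x = Real.sin x / x := if_neg hx0.ne'
    have hrp : x ^ (-2:ℝ) = (x^2)⁻¹ := by
      rw [Real.rpow_neg hx0.le, show (2:ℝ) = ((2:ℕ):ℝ) by norm_num, Real.rpow_natCast]
    rw [hrp, this, Real.norm_eq_abs, _root_.abs_of_nonneg (sq_nonneg _), div_pow]
    have hs : Real.sin x ^ 2 ≤ 1 := Real.sin_sq_le_one x
    rw [div_le_iff₀ (by positivity : (0:ℝ) < x ^ 2), inv_mul_cancel₀ (by positivity : (x:ℝ)^2 ≠ 0)]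
    exact hs
  have : Ici (0:ℝ) = Icc (0:ℝ) 1 ∪ Ioi 1 := (Icc_union_Ioi_eq_Ici (by norm_num)).symm
  rw [this]
  exact h1.union h2

lemma rsinc_sq_integrable : Integrable (fun x => rsinc x ^ 2) := by
  have hIci : IntegrableOn (fun x => rsinc x ^ 2) (Ici (0:ℝ)) := rsinc_sq_integrableOn_Ici
  have h_map_neg : ((volume : Measure ℝ).restrict (Ici 0)).map Neg.neg
      = (volume : Measure ℝ).restrict (Iic 0) := by
    conv => rhs; rw [← Measure.map_neg_eq_self (volume : Measure ℝ),
      measurableEmbedding_neg.restrict_map]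
    simp
  have hIic : IntegrableOn (fun x => rsinc x ^ 2) (Iic (0:ℝ)) := by
    rw [IntegrableOn, ← h_map_neg, measurableEmbedding_neg.integrable_map_iff]
    refine hIci.congr_fun (fun x _ => ?_) measurableSet_Ici
    simp [Function.comp, rsinc_even]
  rw [← integrableOn_univ, ← Iic_union_Ici_of_le (le_refl (0:ℝ))]
  exact hIic.union hIci


/-- For every real `k`, the function `r ↦ sinc(r)² e^{irk}` is Lebesgue integrable on `ℝ`
and `∫ sinc(r)² e^{irk} dr = (π/4)((k-2)sgn(k-2) - 2k·sgn(k) + (k+2)sgn(k+2))`, where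
`sgn` is the sign function with `sgn 0 = 0`.  (Fourier transform of `sinc²`.) -/
theorem fourier_transform_rsinc_sq (k : ℝ) :
    Integrable (fun r : ℝ => ((rsinc r : ℂ)) ^ 2 * Complex.exp (Complex.I * r * k)) ∧
    ∫ r : ℝ, ((rsinc r : ℂ)) ^ 2 * Complex.exp (Complex.I * r * k) =
      ((Real.pi / 4 * ((k - 2) * Real.sign (k - 2) - 2 * k * Real.sign k +
        (k + 2) * Real.sign (k + 2)) : ℝ) : ℂ) := by
  have hπ := Real.pi_pos
  have hsq : Integrable (fun r : ℝ => ((rsinc r : ℂ)) ^ 2) := by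
    have h : Integrable (fun x : ℝ => ((rsinc x ^ 2 : ℝ) : ℂ)) := rsinc_sq_integrable.ofReal
    simpa using h
  have hInt : Integrable (fun r : ℝ => ((rsinc r : ℂ)) ^ 2 * Complex.exp (Complex.I * r * k)) := by
    have h := hsq.bdd_mul
      (f := fun r : ℝ => Complex.exp (Complex.I * r * k)) (c := 1)
      ((Complex.continuous_exp.comp (by fun_prop)).aestronglyMeasurable) (ae_of_all _ fun x => by
        rw [Complex.norm_exp]
        have : (Complex.I * x * k).re = 0 := by simp
        rw [this, Real.exp_zero])
    refine h.congr ?_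
    filter_upwards with x using by ring
  refine ⟨hInt, ?_⟩
  have hFT : 𝓕 trif = fun w : ℝ => ((rsinc w : ℂ)) ^ 2 := funext fourier_trif
  have hfin : Integrable (𝓕 trif) := by rw [hFT]; exact hsq
  have hinv := trif_integrable.fourierInv_fourier_eq hfin (trif_cont.continuousAt
    (x := k / (2 * Real.pi)))
  rw [Real.fourierInv_eq_fourier_neg, hFT,
    Real.fourier_real_eq_integral_exp_smul] at hinv
  have heq : (fun r : ℝ => ((rsinc r : ℂ)) ^ 2 * Complex.exp (Complex.I * r * k))
      = fun v : ℝ => Complex.exp (((-2 * Real.pi * v * (-(k / (2 * Real.pi))) : ℝ) : ℂ)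
          * Complex.I) • ((rsinc v : ℂ)) ^ 2 := by
    funext v
    rw [smul_eq_mul, mul_comm]
    congr 1
    have h2 : (-2 * Real.pi * v * (-(k / (2 * Real.pi))) : ℝ) = v * k := by
      field_simp
    rw [h2]
    push_cast
    ring
  rw [heq, hinv]
  unfold trif
  rw [arith_final]
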